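/- Let Ω ⊂ ℝ^d be measurable, h : Ω → ℝ measurable, and suppose ρ̄ : Ω → [0,1] is a probability density such that ∫_Ω h (ρ̃ - ρ̄) ≥ 0 for every probability density ρ̃ : Ω → [0,1]. Then there exists a constant C ∈ ℝ such that ρ̄ = 1 a.e. on {h < C} and ρ̄ = 0 a.e. on {h > C}. -/

import Mathlib

open MeasureTheory Set Filter

lemma swap_lemma {E : Type*} [MeasurableSpace E] (μ : Measure E) [IsFiniteMeasure μ]
    (h ρ : E → ℝ) (hρm : Measurable ρ)
    (hρ0 : ∀ᵐ x ∂μ, 0 ≤ ρ x) (hρ1 : ∀ᵐ x ∂μ, ρ x ≤ 1)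
    (hρI : Integrable ρ μ) (hhI : Integrable h μ)
    (hρint : ∫ x, ρ x ∂μ = 1)
    (hopt : ∀ ρt : E → ℝ, Measurable ρt → (∀ᵐ x ∂μ, 0 ≤ ρt x) →
      (∀ᵐ x ∂μ, ρt x ≤ 1) → (∫ x, ρt x ∂μ = 1) →
      0 ≤ ∫ x, h x * (ρt x - ρ x) ∂μ)
    (A B : Set E) (hA : MeasurableSet A) (hB : MeasurableSet B)
    (hAB : Disjoint A B) (u v : ℝ) (huv : u < v)
    (hAu : ∀ x ∈ A, h x ≤ u) (hBv : ∀ x ∈ B, v ≤ h x)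
    (ha : 0 < ∫ x in A, (1 - ρ x) ∂μ) (hb : 0 < ∫ x in B, ρ x ∂μ) : False := by
  set a := ∫ x in A, (1 - ρ x) ∂μ with ha_def
  set b := ∫ x in B, ρ x ∂μ with hb_def
  set α := min 1 (b / a) with hα_def
  set β := min 1 (a / b) with hβ_def
  set m := min a b with hm_def
  have hα0 : 0 ≤ α := le_min zero_le_one (by positivity)
  have hα1 : α ≤ 1 := min_le_left _ _
  have hβ0 : 0 ≤ β := le_min zero_le_one (by positivity)
  have hβ1 : β ≤ 1 := min_le_left _ _
  have hm0 : 0 < m := lt_min ha hb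
  have hαa : α * a = m := by
    rw [hα_def, min_mul_of_nonneg _ _ ha.le, one_mul, div_mul_cancel₀ _ ha.ne', hm_def]
  have hβb : β * b = m := by
    rw [hβ_def, min_mul_of_nonneg _ _ hb.le, one_mul, div_mul_cancel₀ _ hb.ne',
      hm_def, min_comm]
  -- the competitor
  set ρt : E → ℝ := fun x => ρ x + α * (A.indicator (fun y => 1 - ρ y) x)
      - β * (B.indicator ρ x) with hρt_def
  have hρtm : Measurable ρt := by
    refine ((hρm.add (measurable_const.mul ?_)).sub (measurable_const.mul ?_))
    · exact (measurable_const.sub hρm).indicator hA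
    · exact hρm.indicator hB
  have hρt0 : ∀ᵐ x ∂μ, 0 ≤ ρt x := by
    filter_upwards [hρ0, hρ1] with x h0 h1
    by_cases hxA : x ∈ A
    · have hxB : x ∉ B := fun hxB => (hAB.ne_of_mem hxA hxB) rfl
      simp only [hρt_def, indicator_of_mem hxA, indicator_of_notMem hxB, mul_zero, sub_zero]
      nlinarith
    · by_cases hxB : x ∈ B
      · simp only [hρt_def, indicator_of_notMem hxA, indicator_of_mem hxB, mul_zero, add_zero]
        nlinarith
      · simp only [hρt_def, indicator_of_notMem hxA, indicator_of_notMem hxB, mul_zero,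
          add_zero, sub_zero]
        exact h0
  have hρt1 : ∀ᵐ x ∂μ, ρt x ≤ 1 := by
    filter_upwards [hρ0, hρ1] with x h0 h1
    by_cases hxA : x ∈ A
    · have hxB : x ∉ B := fun hxB => (hAB.ne_of_mem hxA hxB) rfl
      simp only [hρt_def, indicator_of_mem hxA, indicator_of_notMem hxB, mul_zero, sub_zero]
      nlinarith
    · by_cases hxB : x ∈ B
      · simp only [hρt_def, indicator_of_notMem hxA, indicator_of_mem hxB, mul_zero, add_zero]
        nlinarith
      · simp only [hρt_def, indicator_of_notMem hxA, indicator_of_notMem hxB, mul_zero,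
          add_zero, sub_zero]
        exact h1
  have hIA : Integrable (A.indicator (fun y => 1 - ρ y)) μ :=
    ((integrable_const 1).sub hρI).indicator hA
  have hIB : Integrable (B.indicator ρ) μ := hρI.indicator hB
  have hρtint : ∫ x, ρt x ∂μ = 1 := by
    have e1 : ∫ x, ρt x ∂μ = (∫ x, (ρ x + α * A.indicator (fun y => 1 - ρ y) x) ∂μ)
        - ∫ x, β * B.indicator ρ x ∂μ :=
      integral_sub (hρI.add (hIA.const_mul α)) (hIB.const_mul β)
    rw [e1, integral_add hρI (hIA.const_mul α), integral_const_mul, integral_const_mul,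
      integral_indicator hA, integral_indicator hB, hρint, ← ha_def, ← hb_def, hαa, hβb]
    ring
  have hkey := hopt ρt hρtm hρt0 hρt1 hρtint
  -- compute the integral
  have hfun : (fun x => h x * (ρt x - ρ x)) =
      fun x => α * (A.indicator (fun y => h y * (1 - ρ y)) x)
        - β * (B.indicator (fun y => h y * ρ y) x) := by
    funext x
    by_cases hxA : x ∈ A
    · have hxB : x ∉ B := fun hxB => (hAB.ne_of_mem hxA hxB) rfl
      simp only [hρt_def, indicator_of_mem hxA, indicator_of_notMem hxB, mul_zero, sub_zero]
      ring
    · by_cases hxB : x ∈ B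
      · simp only [hρt_def, indicator_of_notMem hxA, indicator_of_mem hxB, mul_zero, add_zero,
          sub_zero, zero_sub]
        ring
      · simp only [hρt_def, indicator_of_notMem hxA, indicator_of_notMem hxB, mul_zero,
          add_zero, sub_zero]
        ring
  have hIhA : Integrable (fun y => h y * (1 - ρ y)) μ := by
    refine hhI.abs.mono' (hhI.aestronglyMeasurable.mul ((aestronglyMeasurable_const).sub hρm.aestronglyMeasurable)) ?_
    filter_upwards [hρ0, hρ1] with x h0 h1
    rw [Real.norm_eq_abs, abs_mul]
    nlinarith [abs_nonneg (h x), abs_le.2 (⟨by linarith, by linarith⟩ : -1 ≤ 1 - ρ x ∧ 1 - ρ x ≤ 1)]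
  have hIhB : Integrable (fun y => h y * ρ y) μ := by
    refine hhI.abs.mono' (hhI.aestronglyMeasurable.mul hρm.aestronglyMeasurable) ?_
    filter_upwards [hρ0, hρ1] with x h0 h1
    rw [Real.norm_eq_abs, abs_mul]
    nlinarith [abs_nonneg (h x), abs_le.2 (⟨by linarith, by linarith⟩ : -1 ≤ ρ x ∧ ρ x ≤ 1)]
  rw [hfun, integral_sub ((hIhA.indicator hA).const_mul α) ((hIhB.indicator hB).const_mul β),
    integral_const_mul, integral_const_mul, integral_indicator hA, integral_indicator hB] at hkey
  -- bound the two set integrals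
  have hbound1 : ∫ x in A, h x * (1 - ρ x) ∂μ ≤ u * a := by
    have : ∫ x in A, h x * (1 - ρ x) ∂μ ≤ ∫ x in A, u * (1 - ρ x) ∂μ := by
      refine integral_mono_ae (hIhA.restrict) (((integrable_const (1:ℝ)).sub hρI).const_mul u).restrict ?_
      filter_upwards [ae_restrict_mem hA, ae_restrict_of_ae hρ1] with x hx h1
      exact mul_le_mul_of_nonneg_right (hAu x hx) (by linarith)
    rwa [integral_const_mul _ _] at this
  have hbound2 : v * b ≤ ∫ x in B, h x * ρ x ∂μ := by
    have : ∫ x in B, v * ρ x ∂μ ≤ ∫ x in B, h x * ρ x ∂μ := by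
      refine integral_mono_ae ((hρI.const_mul v).restrict) (hIhB.restrict) ?_
      filter_upwards [ae_restrict_mem hB, ae_restrict_of_ae hρ0] with x hx h0
      exact mul_le_mul_of_nonneg_right (hBv x hx) h0
    rwa [integral_const_mul _ _] at this
  have : α * (u * a) - β * (v * b) < 0 := by
    have h1 : α * (u * a) = u * m := by rw [← hαa]; ring
    have h2 : β * (v * b) = v * m := by rw [← hβb]; ring
    rw [h1, h2]
    nlinarith
  nlinarith [mul_le_mul_of_nonneg_left hbound1 hα0, mul_le_mul_of_nonneg_left hbound2 hβ0]

lemma one_div_succ_le {m n : ℕ} (hmn : m ≤ n) : 1/((n:ℝ)+1) ≤ 1/((m:ℝ)+1) := by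
  apply one_div_le_one_div_of_le (by positivity)
  have : (m:ℝ) ≤ (n:ℝ) := Nat.cast_le.2 hmn
  linarith

theorem bang_aux {E : Type*} [MeasurableSpace E] (μ : Measure E) [IsFiniteMeasure μ]
    (hμ : 1 < μ univ) (h : E → ℝ) (hmeas : Measurable h) (hhI : Integrable h μ)
    (ρ : E → ℝ) (hρm : Measurable ρ)
    (hρ0 : ∀ᵐ x ∂μ, 0 ≤ ρ x) (hρ1 : ∀ᵐ x ∂μ, ρ x ≤ 1)
    (hρint : ∫ x, ρ x ∂μ = 1)
    (hopt : ∀ ρt : E → ℝ, Measurable ρt → (∀ᵐ x ∂μ, 0 ≤ ρt x) →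
      (∀ᵐ x ∂μ, ρt x ≤ 1) → (∫ x, ρt x ∂μ = 1) →
      0 ≤ ∫ x, h x * (ρt x - ρ x) ∂μ) :
    ∃ C : ℝ, (∀ᵐ x ∂μ, h x < C → ρ x = 1) ∧ (∀ᵐ x ∂μ, C < h x → ρ x = 0) := by
  have hρI : Integrable ρ μ := by
    refine (integrable_const (1:ℝ)).mono' hρm.aestronglyMeasurable ?_
    filter_upwards [hρ0, hρ1] with x h0 h1
    rw [Real.norm_eq_abs, abs_le]; exact ⟨by linarith, h1⟩
  -- the level C
  set S : Set ℝ := {t | μ {x | h x < t} ≤ 1} with hS_def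
  have hSne : S.Nonempty := by
    have hempty : (⋂ n : ℕ, {x | h x < -(n:ℝ)}) = ∅ := by
      ext x; simp only [mem_iInter, mem_setOf_eq, mem_empty_iff_false, iff_false, not_forall,
        not_lt]
      obtain ⟨n, hn⟩ := exists_nat_gt (-(h x))
      exact ⟨n, by linarith⟩
    have hanti : Antitone (fun n : ℕ => {x | h x < -(n:ℝ)}) := by
      intro m n hmn x hx
      simp only [mem_setOf_eq] at *
      have : (m:ℝ) ≤ (n:ℝ) := Nat.cast_le.2 hmn
      linarith
    have htend := tendsto_measure_iInter_atTop (μ := μ) (s := fun n : ℕ => {x | h x < -(n:ℝ)})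
      (fun n => (hmeas measurableSet_Iio).nullMeasurableSet) hanti ⟨0, measure_ne_top μ _⟩
    rw [hempty, measure_empty] at htend
    have : ∀ᶠ n : ℕ in atTop, μ {x | h x < -(n:ℝ)} < 1 :=
      htend.eventually_lt_const (by norm_num)
    obtain ⟨n, hn⟩ := this.exists
    exact ⟨-(n:ℝ), hn.le⟩
  have hSbdd : BddAbove S := by
    have huniv : (⋃ n : ℕ, {x | h x < (n:ℝ)}) = univ := by
      ext x; simp only [mem_iUnion, mem_setOf_eq, mem_univ, iff_true]
      exact exists_nat_gt (h x)
    have hmono : Monotone (fun n : ℕ => {x | h x < (n:ℝ)}) := by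
      intro m n hmn x hx
      simp only [mem_setOf_eq] at *
      have : (m:ℝ) ≤ (n:ℝ) := Nat.cast_le.2 hmn
      linarith
    have htend := tendsto_measure_iUnion_atTop (μ := μ) hmono
    rw [huniv] at htend
    have : ∀ᶠ n : ℕ in atTop, 1 < μ {x | h x < (n:ℝ)} := htend.eventually_const_lt hμ
    obtain ⟨N, hN⟩ := this.exists
    refine ⟨N, fun t ht => ?_⟩
    by_contra hlt
    push_neg at hlt
    have : μ {x | h x < (N:ℝ)} ≤ μ {x | h x < t} :=
      measure_mono (fun x hx => lt_trans hx hlt)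
    exact absurd (this.trans ht) (not_le.2 hN)
  set C := sSup S with hC_def
  have P1 : ∀ t, t < C → μ {x | h x < t} ≤ 1 := by
    intro t ht
    obtain ⟨t', ht'S, htt'⟩ := exists_lt_of_lt_csSup hSne ht
    exact (measure_mono (fun x hx => lt_trans hx htt')).trans ht'S
  have P2 : ∀ t, C < t → 1 < μ {x | h x < t} := by
    intro t ht
    by_contra hle
    push_neg at hle
    exact absurd (le_csSup hSbdd hle) (not_le.2 ht)
  refine ⟨C, ?_, ?_⟩
  · -- ρ = 1 a.e. on {h < C}
    by_contra hcon
    rw [ae_iff] at hcon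
    have hρ1' := ae_iff.1 hρ1
    set A : ℕ → Set E := fun n =>
      {x | h x ≤ C - 1/((n:ℝ)+1)} ∩ {x | ρ x ≤ 1 - 1/((n:ℝ)+1)} with hA_def
    have hAmeas : ∀ n, MeasurableSet (A n) := fun n =>
      (hmeas measurableSet_Iic).inter (hρm measurableSet_Iic)
    have hcover : {x | ¬(h x < C → ρ x = 1)} ⊆ (⋃ n, A n) ∪ {x | ¬ ρ x ≤ 1} := by
      intro x hx
      simp only [mem_setOf_eq, Classical.not_imp] at hx
      by_cases hle : ρ x ≤ 1
      · left
        have hρlt : ρ x < 1 := lt_of_le_of_ne hle hx.2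
        obtain ⟨n₁, hn₁⟩ := exists_nat_one_div_lt (show (0:ℝ) < C - h x by linarith [hx.1])
        obtain ⟨n₂, hn₂⟩ := exists_nat_one_div_lt (show (0:ℝ) < 1 - ρ x by linarith)
        refine mem_iUnion.2 ⟨max n₁ n₂, ?_, ?_⟩
        · have h1 := one_div_succ_le (le_max_left n₁ n₂)
          simp only [mem_setOf_eq]; linarith
        · have h2 := one_div_succ_le (le_max_right n₁ n₂)
          simp only [mem_setOf_eq]; linarith
      · right; exact hle
    have hex : ∃ n, μ (A n) ≠ 0 := by
      by_contra hall
      push_neg at hall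
      exact hcon (measure_mono_null hcover
        (measure_union_null (measure_iUnion_null hall) hρ1'))
    obtain ⟨n, hn⟩ := hex
    set ε := 1/((n:ℝ)+1) with hε_def
    have hε : 0 < ε := by positivity
    have hApos : 0 < (μ (A n)).toReal := ENNReal.toReal_pos hn (measure_ne_top μ _)
    -- a > 0
    have hA_a : ε * (μ (A n)).toReal ≤ ∫ x in A n, (1 - ρ x) ∂μ := by
      refine (le_of_eq (by rw [measureReal_def, smul_eq_mul, mul_comm])).trans (setIntegral_ge_of_const_le (hAmeas n) (measure_ne_top μ _)
        (fun x hx => ?_) (((integrable_const 1).sub hρI).integrableOn))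
      have := hx.2
      simp only [mem_setOf_eq] at this
      linarith
    have hapos : 0 < ∫ x in A n, (1 - ρ x) ∂μ := lt_of_lt_of_le (by positivity) hA_a
    -- the set D and the complement B
    set D : Set E := {x | h x < C - ε/2} with hD_def
    have hDmeas : MeasurableSet D := hmeas measurableSet_Iio
    have hDle : μ D ≤ 1 := P1 _ (by linarith)
    have hDle' : (μ D).toReal ≤ 1 := by
      have := ENNReal.toReal_mono ENNReal.one_ne_top hDle
      rwa [ENNReal.toReal_one] at this
    have hsub : A n ⊆ D := by
      intro x hx
      have := hx.1
      simp only [mem_setOf_eq] at this ⊢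
      rw [← hε_def] at this
      show h x < C - ε/2
      linarith
    -- bound ∫_D ρ
    have hintAρ : ∫ x in A n, ρ x ∂μ ≤ (1 - ε) * (μ (A n)).toReal := by
      calc ∫ x in A n, ρ x ∂μ ≤ ∫ _x in A n, (1 - ε) ∂μ := by
            refine setIntegral_mono_on hρI.integrableOn
              (integrable_const _).integrableOn (hAmeas n) (fun x hx => ?_)
            exact hx.2
        _ = (1 - ε) * (μ (A n)).toReal := by
            rw [setIntegral_const, measureReal_def, smul_eq_mul]; ring
    have hintDA : ∫ x in D \ A n, ρ x ∂μ ≤ (μ (D \ A n)).toReal := by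
      calc ∫ x in D \ A n, ρ x ∂μ ≤ ∫ _x in D \ A n, (1:ℝ) ∂μ :=
            integral_mono_ae hρI.restrict (integrable_const _) (ae_restrict_of_ae hρ1)
        _ = (μ (D \ A n)).toReal := by rw [setIntegral_const, measureReal_def, smul_eq_mul, mul_one]
    have hmeasadd : (μ (D \ A n)).toReal = (μ D).toReal - (μ (A n)).toReal := by
      rw [measure_diff hsub (hAmeas n).nullMeasurableSet (measure_ne_top μ _),
        ENNReal.toReal_sub_of_le (measure_mono hsub) (measure_ne_top μ _)]
    have hunion : ∫ x in D, ρ x ∂μ = ∫ x in A n, ρ x ∂μ + ∫ x in D \ A n, ρ x ∂μ := by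
      have := setIntegral_union disjoint_sdiff_self_right
        (hDmeas.diff (hAmeas n)) hρI.integrableOn hρI.integrableOn
      rwa [union_diff_cancel hsub] at this
    have hDρ : ∫ x in D, ρ x ∂μ ≤ 1 - ε * (μ (A n)).toReal := by
      rw [hunion]
      have := hintDA
      rw [hmeasadd] at this
      nlinarith
    -- b > 0
    have hsplit := integral_add_compl hDmeas hρI
    have hbpos : 0 < ∫ x in Dᶜ, ρ x ∂μ := by
      have : ∫ x in D, ρ x ∂μ + ∫ x in Dᶜ, ρ x ∂μ = 1 := by rw [hsplit, hρint]
      nlinarith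
    exact swap_lemma μ h ρ hρm hρ0 hρ1 hρI hhI hρint hopt (A n) Dᶜ (hAmeas n)
      hDmeas.compl (disjoint_compl_right.mono_left hsub) (C - ε) (C - ε/2)
      (by linarith) (fun x hx => hx.1) (fun x hx => not_lt.1 hx) hapos hbpos
  · -- ρ = 0 a.e. on {h > C}
    by_contra hcon
    rw [ae_iff] at hcon
    have hρ0' := ae_iff.1 hρ0
    set B : ℕ → Set E := fun n =>
      {x | C + 1/((n:ℝ)+1) ≤ h x} ∩ {x | 1/((n:ℝ)+1) ≤ ρ x} with hB_def
    have hBmeas : ∀ n, MeasurableSet (B n) := fun n =>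
      (hmeas measurableSet_Ici).inter (hρm measurableSet_Ici)
    have hcover : {x | ¬(C < h x → ρ x = 0)} ⊆ (⋃ n, B n) ∪ {x | ¬ 0 ≤ ρ x} := by
      intro x hx
      simp only [mem_setOf_eq, Classical.not_imp] at hx
      by_cases hle : 0 ≤ ρ x
      · left
        have hρlt : 0 < ρ x := lt_of_le_of_ne hle (Ne.symm hx.2)
        obtain ⟨n₁, hn₁⟩ := exists_nat_one_div_lt (show (0:ℝ) < h x - C by linarith [hx.1])
        obtain ⟨n₂, hn₂⟩ := exists_nat_one_div_lt hρlt
        refine mem_iUnion.2 ⟨max n₁ n₂, ?_, ?_⟩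
        · have h1 := one_div_succ_le (le_max_left n₁ n₂)
          simp only [mem_setOf_eq]; linarith
        · have h2 := one_div_succ_le (le_max_right n₁ n₂)
          simp only [mem_setOf_eq]; linarith
      · right; exact hle
    have hex : ∃ n, μ (B n) ≠ 0 := by
      by_contra hall
      push_neg at hall
      exact hcon (measure_mono_null hcover
        (measure_union_null (measure_iUnion_null hall) hρ0'))
    obtain ⟨n, hn⟩ := hex
    set ε := 1/((n:ℝ)+1) with hε_def
    have hε : 0 < ε := by positivity
    have hBpos : 0 < (μ (B n)).toReal := ENNReal.toReal_pos hn (measure_ne_top μ _)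
    -- b > 0
    have hB_b : ε * (μ (B n)).toReal ≤ ∫ x in B n, ρ x ∂μ := by
      refine (le_of_eq (by rw [measureReal_def, smul_eq_mul, mul_comm])).trans (setIntegral_ge_of_const_le (hBmeas n) (measure_ne_top μ _)
        (fun x hx => hx.2) hρI.integrableOn)
    have hbpos : 0 < ∫ x in B n, ρ x ∂μ := lt_of_lt_of_le (by positivity) hB_b
    -- the set D
    set D : Set E := {x | h x < C + ε/2} with hD_def
    have hDmeas : MeasurableSet D := hmeas measurableSet_Iio
    have hDgt : 1 < μ D := P2 _ (by linarith)
    have hDgt' : 1 < (μ D).toReal := by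
      have := ENNReal.toReal_strict_mono (measure_ne_top μ _) hDgt
      rwa [ENNReal.toReal_one] at this
    have hBD : B n ⊆ Dᶜ := by
      intro x hx
      have := hx.1
      simp only [mem_setOf_eq, mem_compl_iff, not_lt] at this ⊢
      rw [← hε_def] at this
      show ¬ h x < C + ε/2
      push_neg
      linarith
    have hcomp : ∫ x in B n, ρ x ∂μ ≤ ∫ x in Dᶜ, ρ x ∂μ :=
      setIntegral_mono_set hρI.integrableOn (ae_restrict_of_ae hρ0)
        (HasSubset.Subset.eventuallyLE hBD)
    have hsplit := integral_add_compl hDmeas hρI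
    have hDρ : ∫ x in D, ρ x ∂μ ≤ 1 - ∫ x in B n, ρ x ∂μ := by
      have : ∫ x in D, ρ x ∂μ + ∫ x in Dᶜ, ρ x ∂μ = 1 := by rw [hsplit, hρint]
      linarith
    have hapos : 0 < ∫ x in D, (1 - ρ x) ∂μ := by
      have he : ∫ x in D, (1 - ρ x) ∂μ = (μ D).toReal - ∫ x in D, ρ x ∂μ := by
        rw [integral_sub (integrable_const _) hρI.restrict, setIntegral_const, measureReal_def, smul_eq_mul,
          mul_one]
      rw [he]
      nlinarith
    exact swap_lemma μ h ρ hρm hρ0 hρ1 hρI hhI hρint hopt D (B n) hDmeas (hBmeas n)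
      (disjoint_compl_right.mono_right hBD) (C + ε/2) (C + ε) (by linarith)
      (fun x hx => le_of_lt hx) (fun x hx => hx.1) hapos hbpos

/-- Bang-bang structure of minimizers under a density constraint: if
`∫ h (ρ̃ - ρ̄) ≥ 0` for all admissible densities `ρ̃`, then there is a level `C` such
that `ρ̄ = 1` a.e. on `{h < C}` and `ρ̄ = 0` a.e. on `{h > C}`. -/
theorem stmt_11 {d : ℕ} (Ω : Set (EuclideanSpace ℝ (Fin d)))
    (hΩ : MeasurableSet Ω) (hfin : volume Ω ≠ ⊤) (hvol : 1 < (volume Ω).toReal)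
    (h : EuclideanSpace ℝ (Fin d) → ℝ) (hmeas : Measurable h)
    (hint : IntegrableOn h Ω)
    (ρbar : EuclideanSpace ℝ (Fin d) → ℝ) (hρmeas : Measurable ρbar)
    (hρ0 : ∀ᵐ x ∂(volume.restrict Ω), 0 ≤ ρbar x)
    (hρ1 : ∀ᵐ x ∂(volume.restrict Ω), ρbar x ≤ 1)
    (hρprob : ∫ x in Ω, ρbar x = 1)
    (hopt : ∀ ρtilde : EuclideanSpace ℝ (Fin d) → ℝ, Measurable ρtilde →
      (∀ᵐ x ∂(volume.restrict Ω), 0 ≤ ρtilde x) →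
      (∀ᵐ x ∂(volume.restrict Ω), ρtilde x ≤ 1) →
      (∫ x in Ω, ρtilde x = 1) →
      0 ≤ ∫ x in Ω, h x * (ρtilde x - ρbar x)) :
    ∃ C : ℝ, (∀ᵐ x ∂(volume.restrict Ω), h x < C → ρbar x = 1) ∧
      (∀ᵐ x ∂(volume.restrict Ω), C < h x → ρbar x = 0) := by
  haveI : IsFiniteMeasure (volume.restrict Ω) :=
    ⟨by rw [Measure.restrict_apply_univ]; exact hfin.lt_top⟩
  refine bang_aux (volume.restrict Ω) ?_ h hmeas hint ρbar hρmeas hρ0 hρ1 hρprob hopt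
  rw [Measure.restrict_apply_univ]
  by_contra hle
  push_neg at hle
  have := ENNReal.toReal_mono ENNReal.one_ne_top hle
  rw [ENNReal.toReal_one] at this
  linarith
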